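/- Let f : ℝ → ℝ be continuously differentiable and suppose there is a constant C₀ > 0 with |f'(x)| ≤ C₀ (1+|x|)^{-(1+ε)} for all x ∈ ℝ. Then there exists a constant C > 0 such that for all x, y ∈ ℝ, |f(x) − f(y)| ≤ C |a(x) − a(y)|. -/

import Mathlib

open MeasureTheory

/-- If `f` is `C¹` with `|f'(x)| ≤ C₀ (1+|x|)^{-(1+ε)}`, then there is `C > 0` such that
`|f(x) − f(y)| ≤ C |a(x) − a(y)|`, where `a(x) = ∫_{-∞}^x (1+ψ(y))^{-(1+ε)} dy`. -/
theorem stmt4 (ε : ℝ) (hε : 0 < ε) (ψ : ℝ → ℝ)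
    (hψ : ContDiff ℝ 3 ψ) (hψ0 : ∀ y, 0 ≤ ψ y)
    (hψabs : ∀ y, 1 ≤ |y| → ψ y = |y|)
    (a : ℝ → ℝ)
    (ha : ∀ x, a x = ∫ y in Set.Iic x, (1 + ψ y) ^ (-(1 + ε)))
    (f : ℝ → ℝ) (hf : ContDiff ℝ 1 f)
    (C₀ : ℝ) (hC₀ : 0 < C₀)
    (hf' : ∀ x, |deriv f x| ≤ C₀ * (1 + |x|) ^ (-(1 + ε))) :
    ∃ C > 0, ∀ x y : ℝ, |f x - f y| ≤ C * |a x - a y| := by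
  set g : ℝ → ℝ := fun y => (1 + ψ y) ^ (-(1 + ε)) with hg
  have hψpos : ∀ y, (0:ℝ) < 1 + ψ y := fun y => by linarith [hψ0 y]
  have hgpos : ∀ y, 0 < g y := fun y => Real.rpow_pos_of_pos (hψpos y) _
  have hgcont : Continuous g :=
    Continuous.rpow_const (continuous_const.add hψ.continuous) (fun y => Or.inl (hψpos y).ne')
  -- bound ψ on [-1,1]
  obtain ⟨M, hM⟩ := (isCompact_Icc (a := (-1:ℝ)) (b := 1)).exists_bound_of_continuousOn
    hψ.continuous.continuousOn
  set K : ℝ := 1 + max M 0 with hK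
  have hK1 : (1:ℝ) ≤ K := le_add_of_nonneg_right (le_max_right M 0)
  have hK0 : (0:ℝ) < K := lt_of_lt_of_le one_pos hK1
  have hbound : ∀ y, 1 + ψ y ≤ K * (1 + |y|) := by
    intro y
    rcases le_or_gt 1 |y| with h | h
    · rw [hψabs y h]
      nlinarith [abs_nonneg y]
    · have hy : y ∈ Set.Icc (-1:ℝ) 1 := abs_le.1 h.le
      have := hM y hy
      have h2 : ψ y ≤ |ψ y| := le_abs_self _
      have : ψ y ≤ max M 0 := by
        calc ψ y ≤ |ψ y| := le_abs_self _
        _ = ‖ψ y‖ := rfl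
        _ ≤ M := hM y hy
        _ ≤ max M 0 := le_max_left _ _
      nlinarith [abs_nonneg y]
  -- key pointwise bound
  have hkey : ∀ z, |deriv f z| ≤ (C₀ * K ^ (1+ε)) * g z := by
    intro z
    have h1 : (1 + |z|) ^ (-(1 + ε)) ≤ K ^ (1+ε) * g z := by
      have hz : (0:ℝ) < 1 + |z| := by positivity
      have h2 : (K * (1+|z|)) ^ (-(1+ε)) ≤ g z :=
        Real.rpow_le_rpow_of_nonpos (hψpos z) (hbound z) (by linarith)
      have h3 : (K * (1+|z|)) ^ (-(1+ε)) = K ^ (-(1+ε)) * (1+|z|) ^ (-(1+ε)) :=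
        Real.mul_rpow hK0.le hz.le
      have h4 : K ^ (1+ε) * (K ^ (-(1+ε)) * (1+|z|) ^ (-(1+ε))) = (1+|z|)^(-(1+ε)) := by
        rw [← mul_assoc, ← Real.rpow_add hK0, add_neg_cancel, Real.rpow_zero, one_mul]
      calc (1+|z|)^(-(1+ε)) = K^(1+ε) * ((K*(1+|z|))^(-(1+ε))) := by rw [h3, h4]
        _ ≤ K^(1+ε) * g z := mul_le_mul_of_nonneg_left h2 (by positivity)
    calc |deriv f z| ≤ C₀ * (1 + |z|) ^ (-(1 + ε)) := hf' z
      _ ≤ C₀ * (K ^ (1+ε) * g z) := by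
          exact mul_le_mul_of_nonneg_left h1 hC₀.le
      _ = (C₀ * K ^ (1+ε)) * g z := by ring
  set C : ℝ := C₀ * K ^ (1+ε) with hC
  have hCpos : 0 < C := by positivity
  -- integrability of g on Iic
  have hgint : ∀ x : ℝ, IntegrableOn g (Set.Iic x) := by
    intro x
    have hint : Integrable (fun y : ℝ => (1 + ‖y‖) ^ (-(1+ε))) := by
      apply integrable_one_add_norm
      simp; linarith
    refine ((hint.const_mul ((2:ℝ)^(1+ε))).mono' (hgcont.aestronglyMeasurable) ?_).integrableOn
    filter_upwards with y
    rw [Real.norm_eq_abs, abs_of_pos (hgpos y)]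
    rcases le_or_gt 1 |y| with h | h
    · rw [hg]; simp only []
      rw [hψabs y h, Real.norm_eq_abs]
      have h1 : (1:ℝ) ≤ (2:ℝ)^(1+ε) := by
        have := Real.rpow_le_rpow_of_exponent_le one_le_two (show (0:ℝ) ≤ 1+ε by linarith)
        rwa [Real.rpow_zero] at this
      nlinarith [Real.rpow_pos_of_pos (show (0:ℝ) < 1+|y| by positivity) (-(1+ε))]
    · have h1 : g y ≤ 1 := by
        rw [hg]; simp only []
        calc (1 + ψ y) ^ (-(1 + ε)) ≤ (1:ℝ) ^ (-(1+ε)) := by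
              apply Real.rpow_le_rpow_of_nonpos one_pos (by linarith [hψ0 y]) (by linarith)
          _ = 1 := Real.one_rpow _
      have h2 : (1:ℝ) ≤ (2:ℝ)^(1+ε) * (1 + ‖y‖) ^ (-(1+ε)) := by
        have hy2 : (1:ℝ) + ‖y‖ ≤ 2 := by rw [Real.norm_eq_abs]; linarith
        have h3 := Real.rpow_le_rpow_of_nonpos (show (0:ℝ) < 1 + ‖y‖ by positivity) hy2
          (show -(1+ε) ≤ 0 by linarith)
        calc (1:ℝ) = (2:ℝ)^(1+ε) * (2:ℝ)^(-(1+ε)) := by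
              rw [← Real.rpow_add two_pos, add_neg_cancel, Real.rpow_zero]
          _ ≤ (2:ℝ)^(1+ε) * (1 + ‖y‖) ^ (-(1+ε)) :=
              mul_le_mul_of_nonneg_left h3 (by positivity)
      linarith
  -- main estimate for y ≤ x
  have hmain : ∀ x y : ℝ, y ≤ x → |f x - f y| ≤ C * |a x - a y| := by
    intro x y hyx
    have hderiv : ∀ z ∈ Set.uIcc y x, HasDerivAt f (deriv f z) z :=
      fun z _ => (hf.differentiable one_ne_zero).differentiableAt.hasDerivAt
    have hcont : Continuous (deriv f) := (hf.iterate_deriv' 0 1).continuous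
    have hintf : IntervalIntegrable (deriv f) volume y x := hcont.intervalIntegrable _ _
    have hfsub : f x - f y = ∫ z in y..x, deriv f z :=
      (intervalIntegral.integral_deriv_eq_sub (fun z _ => (hf.differentiable one_ne_zero).differentiableAt) hintf).symm
    have haeq : a x - a y = ∫ z in Set.Ioc y x, g z := by
      rw [ha x, ha y, ← hg, intervalIntegral.integral_Iic_sub_Iic (hgint y) (hgint x),
        intervalIntegral.integral_of_le hyx]
    rw [hfsub, haeq]
    have hginteg : IntegrableOn g (Set.Ioc y x) := hgcont.integrableOn_Ioc
    have habs : |∫ z in Set.Ioc y x, g z| = ∫ z in Set.Ioc y x, g z := by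
      rw [abs_of_nonneg]
      exact setIntegral_nonneg measurableSet_Ioc (fun z _ => (hgpos z).le)
    rw [habs]
    calc |∫ z in y..x, deriv f z| = |∫ z in Set.Ioc y x, deriv f z| := by
          rw [intervalIntegral.integral_of_le hyx]
      _ = ‖∫ z in Set.Ioc y x, deriv f z‖ := (Real.norm_eq_abs _).symm
      _ ≤ ∫ z in Set.Ioc y x, ‖deriv f z‖ := norm_integral_le_integral_norm _
      _ = ∫ z in Set.Ioc y x, |deriv f z| := by simp [Real.norm_eq_abs]
      _ ≤ ∫ z in Set.Ioc y x, C * g z := by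
          apply setIntegral_mono_on (hcont.abs.integrableOn_Ioc) (hginteg.const_mul C)
            measurableSet_Ioc
          intro z _; exact hkey z
      _ = C * ∫ z in Set.Ioc y x, g z := by rw [integral_const_mul]
  refine ⟨C, hCpos, fun x y => ?_⟩
  rcases le_total y x with h | h
  · exact hmain x y h
  · rw [abs_sub_comm (f x) (f y), abs_sub_comm (a x) (a y)]
    exact hmain y x h
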